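/- arXiv:1002.1908 — 2 statements merged into one kernel-verified Lean document; each statement's English description precedes it below -/
import Mathlib

section
/- Let d ≥ 3 be an odd integer and set t = (d−1)/2. Define the t×t matrix A(P,d) whose k-th row (k = 1,…,t) is (b(kP)−2, k^{d−3}, k^{d−5}, …, k^2), and the t×t matrix D(P,d) whose k-th row is (k^{d−1}, k^{d−3}, …, k^2). Then 2·e_{d−1}·det D(P,d) = det A(P,d); equivalently, the lattice surface area surf(P) = 2·e_{d−1} of P satisfies surf(P) = det A(P,d) / det D(P,d). -/
open Finset MeasureTheory Pointwise

noncomputable section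

/-- The canonical embedding of `ℤ^d` into `ℝ^d`. -/
def intCast (d : ℕ) : (Fin d → ℤ) → (Fin d → ℝ) := fun v i => (v i : ℝ)

/-- The set of lattice points of `ℝ^d`. -/
def latticePts (d : ℕ) : Set (Fin d → ℝ) := Set.range (intCast d)

/-- `G S` is the number of lattice points in `S`. -/
def G {d : ℕ} (S : Set (Fin d → ℝ)) : ℕ := (S ∩ latticePts d).ncard

/-- `ip S` is the number of lattice points in the interior of `S`. -/
def ip {d : ℕ} (S : Set (Fin d → ℝ)) : ℕ := (interior S ∩ latticePts d).ncard

/-- `bp S` is the number of lattice points on the boundary of `S`. -/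
def bp {d : ℕ} (S : Set (Fin d → ℝ)) : ℕ := G S - ip S

/-- Lattice points in a bounded set form a finite set. -/
lemma lattice_finite {d : ℕ} (S : Set (Fin d → ℝ)) (hS : Bornology.IsBounded S) :
    (S ∩ latticePts d).Finite := by
  obtain ⟨R, hR⟩ := hS.subset_closedBall (0 : Fin d → ℝ)
  have hpre : (intCast d ⁻¹' S) ⊆ Set.pi Set.univ
      (fun _ : Fin d => (Set.Icc (-⌈R⌉) ⌈R⌉ : Set ℤ)) := by
    intro v hv i _
    have h1 : ‖intCast d v‖ ≤ R := by
      have := hR hv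
      rwa [Metric.mem_closedBall, dist_zero_right] at this
    have h2 : ‖(intCast d v) i‖ ≤ ‖intCast d v‖ := norm_le_pi_norm _ i
    have h3 : |((v i : ℝ))| ≤ R := le_trans h2 h1
    have h4 : ((|v i| : ℤ) : ℝ) ≤ ((⌈R⌉ : ℤ) : ℝ) := by
      rw [Int.cast_abs]
      exact le_trans h3 (Int.le_ceil R)
    have h5 : |v i| ≤ ⌈R⌉ := by exact_mod_cast h4
    constructor
    · exact neg_le_of_abs_le h5
    · exact le_of_abs_le h5
  have hfin : (intCast d ⁻¹' S).Finite :=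
    Set.Finite.subset (Set.Finite.pi (fun _ => Set.finite_Icc _ _)) hpre
  have hsub : S ∩ latticePts d ⊆ intCast d '' (intCast d ⁻¹' S) := by
    rintro x ⟨hx, v, rfl⟩
    exact ⟨v, hx, rfl⟩
  exact Set.Finite.subset (hfin.image _) hsub

/-- for an odd `d ≥ 3` and a `d`-dimensional lattice polytope `P`
with Ehrhart polynomial `∑ eᵢ xⁱ`, the surface area `2 e_{d-1}` satisfies
`2 e_{d-1} = det A(P,d) / det D(P,d)`. -/
theorem surf_eq_det_ratio_odd (d : ℕ) (hd3 : 3 ≤ d) (hodd : Odd d)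
    (P : Set (Fin d → ℝ))
    (hP : ∃ V : Finset (Fin d → ℤ), P = convexHull ℝ (intCast d '' ↑V))
    (hdim : (interior P).Nonempty)
    (e : ℕ → ℚ)
    (hE : ∀ n : ℕ, (∑ i ∈ Finset.range (d + 1), e i * (n : ℚ) ^ i) = G ((n : ℝ) • P))
    (hRec : ∀ n : ℕ, 1 ≤ n →
      (∑ i ∈ Finset.range (d + 1), e i * (-(n : ℚ)) ^ i) = (-1) ^ d * ip ((n : ℝ) • P))
    (t : ℕ) (ht : t = (d - 1) / 2)
    (A D : Matrix (Fin t) (Fin t) ℚ)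
    (hA : ∀ k j, A k j =
      if (j : ℕ) = 0 then (bp ((((k : ℕ) + 1 : ℕ) : ℝ) • P) : ℚ) - 2
      else ((k : ℕ) + 1 : ℚ) ^ (d - 1 - 2 * (j : ℕ)))
    (hD : ∀ k j, D k j = ((k : ℕ) + 1 : ℚ) ^ (d - 1 - 2 * (j : ℕ))) :
    2 * e (d - 1) * D.det = A.det := by
  -- d = 2t + 1
  obtain ⟨m, hm⟩ := hodd
  have htm : t = m := by omega
  subst htm
  have hdt : d = 2 * t + 1 := by omega
  have ht1 : 1 ≤ t := by omega
  haveI : NeZero t := ⟨by omega⟩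
  -- P is bounded
  obtain ⟨V, hV⟩ := hP
  have hPb : Bornology.IsBounded P := by
    rw [hV]
    exact ((V.finite_toSet.image _).isCompact_convexHull ℝ).isBounded
  have hPne : P.Nonempty := hdim.mono interior_subset
  -- e 0 = 1
  have he0 : e 0 = 1 := by
    have h := hE 0
    rw [Finset.sum_eq_single 0 (by
      intro i _ hi
      simp [zero_pow hi]) (by simp)] at h
    have h0P : ((0 : ℕ) : ℝ) • P = {0} := by
      push_cast
      rw [Set.zero_smul_set hPne]
      rfl
    rw [h0P] at h
    have hG1 : G ({0} : Set (Fin d → ℝ)) = 1 := by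
      have heq : ({0} : Set (Fin d → ℝ)) ∩ latticePts d = {0} := by
        apply Set.inter_eq_self_of_subset_left
        rintro x rfl
        exact ⟨0, by funext i; simp [intCast]⟩
      rw [G, heq, Set.ncard_singleton]
    rw [hG1] at h
    simpa using h
  -- boundary point counts
  have hbp : ∀ n : ℕ, 1 ≤ n →
      (bp ((n : ℝ) • P) : ℚ) = ∑ i ∈ Finset.range (d + 1),
        (1 + (-1 : ℚ) ^ i) * e i * (n : ℚ) ^ i := by
    intro n hn
    have hfin : (((n : ℝ) • P) ∩ latticePts d).Finite :=
      lattice_finite _ (hPb.smul₀ _)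
    have hle : ip ((n : ℝ) • P) ≤ G ((n : ℝ) • P) :=
      Set.ncard_le_ncard (Set.inter_subset_inter_left _ interior_subset) hfin
    have hGq : (G ((n : ℝ) • P) : ℚ) = ∑ i ∈ Finset.range (d + 1), e i * (n : ℚ) ^ i :=
      (hE n).symm
    have hneg : ((-1 : ℚ) ^ d) = -1 := Odd.neg_one_pow ⟨t, by omega⟩
    have hipq : (ip ((n : ℝ) • P) : ℚ) =
        -∑ i ∈ Finset.range (d + 1), e i * (-(n : ℚ)) ^ i := by
      have h := hRec n hn
      rw [hneg] at h
      linarith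
    have hcast : (bp ((n : ℝ) • P) : ℚ)
        = (G ((n : ℝ) • P) : ℚ) - (ip ((n : ℝ) • P) : ℚ) := by
      rw [bp, Nat.cast_sub hle]
    rw [hcast, hGq, hipq, sub_neg_eq_add, ← Finset.sum_add_distrib]
    apply Finset.sum_congr rfl
    intro i _
    rw [neg_pow]
    ring
  -- the column-operation matrix
  set c : ℕ → ℚ := fun l => 2 * e (d - 1 - 2 * l) with hc
  set M : Matrix (Fin t) (Fin t) ℚ :=
    fun l j => if (j : ℕ) = 0 then c (l : ℕ) else if l = j then 1 else 0 with hM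
  -- key identity: column 0 of A
  have hcol0 : ∀ k : Fin t, A k 0 = ∑ l : Fin t,
      ((k : ℕ) + 1 : ℚ) ^ (d - 1 - 2 * (l : ℕ)) * c (l : ℕ) := by
    intro k
    rw [hA k 0, if_pos (show ((0 : Fin t) : ℕ) = 0 from rfl)]
    have hkq : (((k : ℕ) + 1 : ℕ) : ℚ) = ((k : ℕ) + 1 : ℚ) := by push_cast; ring
    have h1 := hbp ((k : ℕ) + 1) (by omega)
    rw [hkq] at h1
    set x : ℚ := ((k : ℕ) + 1 : ℚ) with hx
    -- sum over even indices
    have h2 : ∑ i ∈ Finset.range (d + 1), (1 + (-1 : ℚ) ^ i) * e i * x ^ i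
        = ∑ l ∈ Finset.range (t + 1), 2 * e (2 * l) * x ^ (2 * l) := by
      rw [← Finset.sum_filter_of_ne (p := fun i => Even i)
        (by
          intro i _ hne
          by_contra hev
          apply hne
          rw [Nat.not_even_iff_odd] at hev
          rw [hev.neg_one_pow]
          ring)]
      apply Finset.sum_nbij' (i := fun i => i / 2) (j := fun l => 2 * l)
      · intro a ha
        simp only [Finset.mem_filter, Finset.mem_range] at ha
        obtain ⟨r, hr⟩ := ha.2
        simp only [Finset.mem_range]
        omega
      · intro a ha
        simp only [Finset.mem_range] at ha
        simp only [Finset.mem_filter, Finset.mem_range]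
        exact ⟨by omega, ⟨a, by omega⟩⟩
      · intro a ha
        simp only [Finset.mem_filter, Finset.mem_range] at ha
        obtain ⟨r, hr⟩ := ha.2
        omega
      · intro a _
        omega
      · intro a ha
        simp only [Finset.mem_filter, Finset.mem_range] at ha
        have h2a : 2 * (a / 2) = a := by
          obtain ⟨r, hr⟩ := ha.2; omega
        rw [h2a]
        rw [Even.neg_one_pow ha.2]
        ring
    have h3 : ∑ l ∈ Finset.range (t + 1), 2 * e (2 * l) * x ^ (2 * l)
        = 2 + ∑ l ∈ Finset.range t, 2 * e (2 * (l + 1)) * x ^ (2 * (l + 1)) := by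
      rw [Finset.sum_range_succ' (fun l => 2 * e (2 * l) * x ^ (2 * l))]
      simp [he0]
      ring
    have h4 : ∑ l : Fin t, x ^ (d - 1 - 2 * (l : ℕ)) * c (l : ℕ)
        = ∑ l ∈ Finset.range t, 2 * e (2 * (l + 1)) * x ^ (2 * (l + 1)) := by
      rw [Fin.sum_univ_eq_sum_range (fun l => x ^ (d - 1 - 2 * l) * c l) t]
      rw [← Finset.sum_range_reflect (fun l => 2 * e (2 * (l + 1)) * x ^ (2 * (l + 1))) t]
      apply Finset.sum_congr rfl
      intro l hl
      simp only [Finset.mem_range] at hl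
      have hexp : 2 * (t - 1 - l + 1) = d - 1 - 2 * l := by omega
      rw [hexp, hc]
      ring
    rw [h1, h2, h3, h4]
    ring
  -- A = D * M
  have hAM : A = D * M := by
    funext k j
    rw [Matrix.mul_apply]
    by_cases hj : (j : ℕ) = 0
    · have hj0 : j = 0 := by
        ext; simpa using hj
      subst hj0
      rw [hcol0 k]
      apply Finset.sum_congr rfl
      intro l _
      rw [hD, hM]
      simp
    · rw [hA k j, if_neg hj]
      rw [Finset.sum_eq_single j
        (by
          intro l _ hlj
          simp [hM, hj, hlj, show j ≠ 0 from fun h => hj (by simp [h])])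
        (by simp)]
      simp [hM, hj, hD, show j ≠ 0 from fun h => hj (by simp [h])]
  -- M is lower triangular with det = c 0 = 2 * e (d - 1)
  have hMdet : M.det = 2 * e (d - 1) := by
    have htri : M.BlockTriangular OrderDual.toDual := by
      intro l j hlj
      have hlj' : (l : ℕ) < (j : ℕ) := hlj
      rw [hM]
      simp only
      rw [if_neg (by omega), if_neg (by
        intro h
        rw [h] at hlj'
        omega)]
    rw [Matrix.det_of_lowerTriangular M htri]
    rw [Finset.prod_eq_single (0 : Fin t)
      (by
        intro l _ hl
        have hl' : ¬ ((l : ℕ) = 0) := by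
          intro h
          apply hl
          ext
          simpa using h
        simp [hM, hl', hl])
      (by simp)]
    simp [hM, hc]
  rw [hAM, Matrix.det_mul, hMdet]
  ring
end
end

section
/- Let d ≥ 2 be an even integer and set t = d/2. Define the t×t matrix B(P,d) whose k-th row (k = 1,…,t) is (b(kP), k^{d−3}, k^{d−5}, …, k), and the t×t matrix D(P,d) whose k-th row is (k^{d−1}, k^{d−3}, …, k). Then 2·e_{d−1}·det D(P,d) = det B(P,d); equivalently, the lattice surface area surf(P) = 2·e_{d−1} of P satisfies surf(P) = det B(P,d) / det D(P,d). -/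
open Finset MeasureTheory Pointwise

noncomputable section

lemma finite_lattice_inter {d : ℕ} {S : Set (Fin d → ℝ)} (hS : Bornology.IsBounded S) :
    (S ∩ latticePts d).Finite := by
  obtain ⟨C, hC⟩ := hS.subset_closedBall 0
  have hT : (intCast d ⁻¹' S).Finite := by
    apply Set.Finite.subset (Set.Finite.pi (fun i : Fin d => Set.finite_Icc (-⌈C⌉) ⌈C⌉))
    intro v hv i _
    have h2 : ‖intCast d v‖ ≤ C := by simpa using hC hv
    have h3 : |(v i : ℝ)| ≤ C := by
      have := norm_le_pi_norm (intCast d v) i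
      simpa [intCast] using this.trans h2
    have h4 : |(v i : ℝ)| ≤ (⌈C⌉ : ℝ) := h3.trans (Int.le_ceil C)
    rw [← Int.cast_abs] at h4
    have : |v i| ≤ ⌈C⌉ := by exact_mod_cast h4
    simp [Set.mem_Icc, abs_le] at this ⊢
    omega
  have heq : S ∩ latticePts d = intCast d '' (intCast d ⁻¹' S) := by
    rw [Set.image_preimage_eq_inter_range]; rfl
  rw [heq]; exact hT.image _


/-- for an even `d ≥ 2` and a `d`-dimensional lattice polytope `P`
with Ehrhart polynomial `∑ eᵢ xⁱ`, the surface area `2 e_{d-1}` satisfies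
`2 e_{d-1} = det B(P,d) / det D(P,d)`. -/
theorem surf_eq_det_ratio_even (d : ℕ) (hd2 : 2 ≤ d) (heven : Even d)
    (P : Set (Fin d → ℝ))
    (hP : ∃ V : Finset (Fin d → ℤ), P = convexHull ℝ (intCast d '' ↑V))
    (hdim : (interior P).Nonempty)
    (e : ℕ → ℚ)
    (hE : ∀ n : ℕ, (∑ i ∈ Finset.range (d + 1), e i * (n : ℚ) ^ i) = G ((n : ℝ) • P))
    (hRec : ∀ n : ℕ, 1 ≤ n →
      (∑ i ∈ Finset.range (d + 1), e i * (-(n : ℚ)) ^ i) = (-1) ^ d * ip ((n : ℝ) • P))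
    (t : ℕ) (ht : t = d / 2)
    (B D : Matrix (Fin t) (Fin t) ℚ)
    (hB : ∀ k j, B k j =
      if (j : ℕ) = 0 then (bp ((((k : ℕ) + 1 : ℕ) : ℝ) • P) : ℚ)
      else ((k : ℕ) + 1 : ℚ) ^ (d - 1 - 2 * (j : ℕ)))
    (hD : ∀ k j, D k j = ((k : ℕ) + 1 : ℚ) ^ (d - 1 - 2 * (j : ℕ))) :
    2 * e (d - 1) * D.det = B.det := by
  obtain ⟨V, hV⟩ := hP
  have hd2t : d = 2 * t := by
    obtain ⟨m, hm⟩ := heven; omega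
  have ht1 : 1 ≤ t := by omega
  haveI : NeZero t := ⟨by omega⟩
  -- P is compact, hence each n • P is bounded
  have hPc : IsCompact P := by
    rw [hV]; exact (((V : Set (Fin d → ℤ)).toFinite.image _)).isCompact_convexHull ℝ
  have hbd : ∀ n : ℕ, Bornology.IsBounded ((n : ℝ) • P) := by
    intro n
    exact (hPc.smul (n : ℝ)).isBounded
  -- bp as a difference of casts
  have hbp : ∀ n : ℕ, 1 ≤ n → (bp ((n : ℝ) • P) : ℚ) = (G ((n : ℝ) • P) : ℚ) - ip ((n : ℝ) • P) := by
    intro n hn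
    have hfin := finite_lattice_inter (d := d) (hbd n)
    have hle : ip ((n : ℝ) • P) ≤ G ((n : ℝ) • P) := by
      apply Set.ncard_le_ncard _ hfin
      exact Set.inter_subset_inter_left _ interior_subset
    rw [bp, Nat.cast_sub hle]
  -- key computation
  have key : ∀ k : Fin t, (bp ((((k : ℕ) + 1 : ℕ) : ℝ) • P) : ℚ)
      = ∑ j : Fin t, (2 * e (d - 1 - 2 * (j : ℕ))) * D k j := by
    intro k
    set n : ℕ := (k : ℕ) + 1 with hn
    have hn1 : 1 ≤ n := Nat.le_add_left 1 _
    have h1 : (bp ((n : ℝ) • P) : ℚ)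
        = (∑ i ∈ Finset.range (d + 1), e i * (n : ℚ) ^ i)
          - (∑ i ∈ Finset.range (d + 1), e i * (-(n : ℚ)) ^ i) := by
      rw [hbp n hn1, hE n, hRec n hn1, heven.neg_one_pow, one_mul]
    rw [h1, ← Finset.sum_sub_distrib]
    have h2 : ∀ i ∈ Finset.range (d + 1),
        e i * (n : ℚ) ^ i - e i * (-(n : ℚ)) ^ i
        = if Odd i then 2 * e i * (n : ℚ) ^ i else 0 := by
      intro i _
      rcases Nat.even_or_odd i with hi | hi
      · simp [hi.neg_pow, hi, Nat.not_odd_iff_even.mpr hi]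
      · rw [hi.neg_pow, if_pos hi]; ring
    rw [Finset.sum_congr rfl h2, ← Finset.sum_filter]
    have himg : (Finset.range (d+1)).filter (fun i => Odd i)
        = (Finset.range t).image (fun j => 2*j+1) := by
      ext i
      simp only [Finset.mem_filter, Finset.mem_image, Finset.mem_range, Nat.odd_iff]
      constructor
      · rintro ⟨h1, h2⟩; exact ⟨i/2, by omega, by omega⟩
      · rintro ⟨j, hj, rfl⟩; omega
    rw [himg, Finset.sum_image (by intro a _ b _ h; simp only at h; omega), ← Finset.sum_range_reflect,
      ← Fin.sum_univ_eq_sum_range]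
    apply Finset.sum_congr rfl
    intro j _
    have hj : (j : ℕ) < t := j.isLt
    have hexp : 2*(t-1-(j:ℕ))+1 = d - 1 - 2*(j:ℕ) := by omega
    rw [hD, hexp]
    have : ((n : ℚ)) = ((k : ℕ) : ℚ) + 1 := by push_cast [hn]; ring
    rw [this]
  -- determinant step
  have hBD : B = D.updateCol 0 (fun k => ∑ j : Fin t,
      (fun j : Fin t => 2 * e (d - 1 - 2 * (j : ℕ))) j • D k j) := by
    ext k j
    rw [Matrix.updateCol_apply]
    by_cases hj : j = 0
    · rw [if_pos hj, hB, if_pos (by simp [hj]), key k]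
      simp only [smul_eq_mul]
    · rw [if_neg hj, hB, if_neg (fun h => hj (Fin.ext (by simp [h]))), hD]
  rw [hBD, Matrix.det_updateCol_sum]
  have h0 : d - 1 - 2 * ((0 : Fin t) : ℕ) = d - 1 := by simp
  rw [h0, smul_eq_mul]
end
end
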